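/- Let f : ℝ → ℝ be continuous, let 1 < h₁ ≤ h₂ be real constants, set F(t) := ∫₀ᵗ f(τ) dτ, and assume F(t) ≥ 0 and h₁·F(t) ≤ t·f(t) ≤ h₂·F(t) for all t ∈ ℝ. Then for every t with |t| ≥ 1 one has h₁·B·|t|^{h₁} ≤ t·f(t) ≤ h₂·A·|t|^{h₂}, where B := min{F(1), F(-1)} and A := max{F(1), F(-1)}. -/

import Mathlib

open Real Set

private lemma phi_deriv (F f : ℝ → ℝ) (h : ℝ)
    (hd : ∀ t, HasDerivAt F (f t) t) {x : ℝ} (hx : 0 < x) :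
    HasDerivAt (fun t => F t * t ^ (-h)) (x ^ (-h - 1) * (x * f x - h * F x)) x := by
  have h1 : HasDerivAt (fun t : ℝ => t ^ (-h)) (-h * x ^ (-h - 1)) x :=
    Real.hasDerivAt_rpow_const (Or.inl hx.ne')
  have := (hd x).mul h1
  have hxh : x ^ (-h - 1) * x = x ^ (-h) := by
    calc x ^ (-h - 1) * x = x ^ (-h - 1 + 1) := by rw [Real.rpow_add hx, Real.rpow_one]
      _ = x ^ (-h) := by ring_nf
  have expand : x ^ (-h - 1) * (x * f x - h * F x)
      = f x * x ^ (-h) + F x * (-h * x ^ (-h - 1)) := by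
    calc x ^ (-h - 1) * (x * f x - h * F x)
        = (x ^ (-h - 1) * x) * f x - h * x ^ (-h - 1) * F x := by ring
      _ = f x * x ^ (-h) + F x * (-h * x ^ (-h - 1)) := by rw [hxh]; ring
  rw [expand]
  exact this

private lemma aux_lower (F f : ℝ → ℝ) (h : ℝ) (hh : 0 < h)
    (hd : ∀ t, HasDerivAt F (f t) t)
    (hineq : ∀ t, h * F t ≤ t * f t) :
    ∀ t, 1 ≤ t → F 1 * t ^ h ≤ F t := by
  intro t ht
  have hmono : MonotoneOn (fun t => F t * t ^ (-h)) (Ici (1 : ℝ)) := by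
    apply monotoneOn_of_hasDerivWithinAt_nonneg (convex_Ici 1)
      (f' := fun x => x ^ (-h - 1) * (x * f x - h * F x))
    · intro x hx
      exact ((phi_deriv F f h hd (lt_of_lt_of_le zero_lt_one hx)).continuousAt).continuousWithinAt
    · intro x hx
      rw [interior_Ici] at hx
      exact (phi_deriv F f h hd (lt_trans zero_lt_one hx)).hasDerivWithinAt
    · intro x hx
      rw [interior_Ici] at hx
      have hx0 : (0:ℝ) < x := lt_trans zero_lt_one hx
      exact mul_nonneg (Real.rpow_nonneg hx0.le _) (by linarith [hineq x])
  have := hmono (self_mem_Ici) (mem_Ici.mpr ht) ht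
  simp only [Real.one_rpow, mul_one] at this
  have ht0 : (0:ℝ) < t := lt_of_lt_of_le zero_lt_one ht
  have hpow : (0:ℝ) < t ^ h := Real.rpow_pos_of_pos ht0 h
  have key : F 1 * t ^ h ≤ F t * t ^ (-h) * t ^ h :=
    mul_le_mul_of_nonneg_right this hpow.le
  rwa [mul_assoc, ← Real.rpow_add ht0, neg_add_cancel, Real.rpow_zero, mul_one] at key

private lemma aux_upper (F f : ℝ → ℝ) (h : ℝ) (hh : 0 < h)
    (hd : ∀ t, HasDerivAt F (f t) t)
    (hineq : ∀ t, t * f t ≤ h * F t) :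
    ∀ t, 1 ≤ t → F t ≤ F 1 * t ^ h := by
  intro t ht
  have hmono : AntitoneOn (fun t => F t * t ^ (-h)) (Ici (1 : ℝ)) := by
    apply antitoneOn_of_hasDerivWithinAt_nonpos (convex_Ici 1)
      (f' := fun x => x ^ (-h - 1) * (x * f x - h * F x))
    · intro x hx
      exact ((phi_deriv F f h hd (lt_of_lt_of_le zero_lt_one hx)).continuousAt).continuousWithinAt
    · intro x hx
      rw [interior_Ici] at hx
      exact (phi_deriv F f h hd (lt_trans zero_lt_one hx)).hasDerivWithinAt
    · intro x hx
      rw [interior_Ici] at hx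
      have hx0 : (0:ℝ) < x := lt_trans zero_lt_one hx
      exact mul_nonpos_of_nonneg_of_nonpos (Real.rpow_nonneg hx0.le _) (by linarith [hineq x])
  have := hmono (self_mem_Ici) (mem_Ici.mpr ht) ht
  simp only [Real.one_rpow, mul_one] at this
  have ht0 : (0:ℝ) < t := lt_of_lt_of_le zero_lt_one ht
  have hpow : (0:ℝ) < t ^ h := Real.rpow_pos_of_pos ht0 h
  have key : F t * t ^ (-h) * t ^ h ≤ F 1 * t ^ h :=
    mul_le_mul_of_nonneg_right this hpow.le
  rwa [mul_assoc, ← Real.rpow_add ht0, neg_add_cancel, Real.rpow_zero, mul_one] at key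

/-- Two-sided growth bound for `t * f t`: if `1 < h₁ ≤ h₂`, `F ≥ 0` and
`h₁ * F t ≤ t * f t ≤ h₂ * F t` for all `t`, then for `|t| ≥ 1` one has
`h₁ * B * |t| ^ h₁ ≤ t * f t ≤ h₂ * A * |t| ^ h₂`, where
`B = min (F 1) (F (-1))` and `A = max (F 1) (F (-1))`. -/
theorem tf_two_sided_growth_bound
    (f : ℝ → ℝ) (hf : Continuous f) (h₁ h₂ : ℝ) (hh₁ : 1 < h₁) (hh₁₂ : h₁ ≤ h₂)
    (F : ℝ → ℝ) (hF : ∀ t : ℝ, F t = ∫ τ in (0 : ℝ)..t, f τ)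
    (hFnonneg : ∀ t : ℝ, 0 ≤ F t)
    (hineq₁ : ∀ t : ℝ, h₁ * F t ≤ t * f t)
    (hineq₂ : ∀ t : ℝ, t * f t ≤ h₂ * F t) :
    ∀ t : ℝ, 1 ≤ |t| →
      h₁ * min (F 1) (F (-1)) * |t| ^ h₁ ≤ t * f t ∧
      t * f t ≤ h₂ * max (F 1) (F (-1)) * |t| ^ h₂ := by
  have hh₁0 : (0:ℝ) < h₁ := lt_trans zero_lt_one hh₁
  have hh₂0 : (0:ℝ) < h₂ := lt_of_lt_of_le hh₁0 hh₁₂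
  have hd : ∀ t, HasDerivAt F (f t) t := by
    intro t
    have := (hf.integral_hasStrictDerivAt 0 t).hasDerivAt
    have heq : F = fun u => ∫ τ in (0:ℝ)..u, f τ := funext hF
    rw [heq]
    exact this
  -- the reflected function
  set G : ℝ → ℝ := fun s => F (-s) with hG
  set g : ℝ → ℝ := fun s => -f (-s) with hg
  have hdG : ∀ s, HasDerivAt G (g s) s := by
    intro s
    have := (hd (-s)).comp s (hasDerivAt_neg s)
    simpa [hG, hg, mul_comm, Function.comp_def] using this
  have hineqG₁ : ∀ s, h₁ * G s ≤ s * g s := by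
    intro s
    have := hineq₁ (-s)
    simpa [hG, hg] using by nlinarith [hineq₁ (-s)]
  have hineqG₂ : ∀ s, s * g s ≤ h₂ * G s := by
    intro s
    simpa [hG, hg] using by nlinarith [hineq₂ (-s)]
  intro t ht
  have hB₁ : min (F 1) (F (-1)) ≤ F 1 := min_le_left _ _
  have hB₂ : min (F 1) (F (-1)) ≤ F (-1) := min_le_right _ _
  have hA₁ : F 1 ≤ max (F 1) (F (-1)) := le_max_left _ _
  have hA₂ : F (-1) ≤ max (F 1) (F (-1)) := le_max_right _ _
  have hpow₁ : (0:ℝ) < |t| ^ h₁ := Real.rpow_pos_of_pos (lt_of_lt_of_le zero_lt_one ht) h₁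
  have hpow₂ : (0:ℝ) < |t| ^ h₂ := Real.rpow_pos_of_pos (lt_of_lt_of_le zero_lt_one ht) h₂
  rcases le_or_gt 1 t with htp | htn
  · have habs : |t| = t := abs_of_pos (lt_of_lt_of_le zero_lt_one htp)
    rw [habs]
    constructor
    · have hlow := aux_lower F f h₁ hh₁0 hd hineq₁ t htp
      have : h₁ * (min (F 1) (F (-1)) * t ^ h₁) ≤ h₁ * F t := by
        apply mul_le_mul_of_nonneg_left _ hh₁0.le
        calc min (F 1) (F (-1)) * t ^ h₁ ≤ F 1 * t ^ h₁ := by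
              apply mul_le_mul_of_nonneg_right hB₁ (by rw [habs] at hpow₁; exact hpow₁.le)
          _ ≤ F t := hlow
      calc h₁ * min (F 1) (F (-1)) * t ^ h₁ = h₁ * (min (F 1) (F (-1)) * t ^ h₁) := by ring
        _ ≤ h₁ * F t := this
        _ ≤ t * f t := hineq₁ t
    · have hup := aux_upper F f h₂ hh₂0 hd hineq₂ t htp
      calc t * f t ≤ h₂ * F t := hineq₂ t
        _ ≤ h₂ * (F 1 * t ^ h₂) := mul_le_mul_of_nonneg_left hup hh₂0.le
        _ ≤ h₂ * max (F 1) (F (-1)) * t ^ h₂ := by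
            rw [mul_assoc]
            apply mul_le_mul_of_nonneg_left _ hh₂0.le
            apply mul_le_mul_of_nonneg_right hA₁ (by rw [habs] at hpow₂; exact hpow₂.le)
  · have htneg : t ≤ -1 := by
      rcases abs_cases t with ⟨h1, _⟩ | ⟨h1, _⟩ <;> [linarith; linarith]
    have hs : (1:ℝ) ≤ -t := by linarith
    have habs : |t| = -t := abs_of_neg (by linarith)
    have hGt : G (-t) = F t := by simp [hG]
    have hG1 : G 1 = F (-1) := by simp [hG]
    rw [habs]
    constructor
    · have hlow := aux_lower G g h₁ hh₁0 hdG hineqG₁ (-t) hs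
      rw [hG1, hGt] at hlow
      have step : min (F 1) (F (-1)) * (-t) ^ h₁ ≤ F t :=
        le_trans (mul_le_mul_of_nonneg_right hB₂ (by rw [habs] at hpow₁; exact hpow₁.le)) hlow
      calc h₁ * min (F 1) (F (-1)) * (-t) ^ h₁
            = h₁ * (min (F 1) (F (-1)) * (-t) ^ h₁) := by ring
        _ ≤ h₁ * F t := mul_le_mul_of_nonneg_left step hh₁0.le
        _ ≤ t * f t := hineq₁ t
    · have hup := aux_upper G g h₂ hh₂0 hdG hineqG₂ (-t) hs
      rw [hG1, hGt] at hup
      calc t * f t ≤ h₂ * F t := hineq₂ t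
        _ ≤ h₂ * (F (-1) * (-t) ^ h₂) := mul_le_mul_of_nonneg_left hup hh₂0.le
        _ ≤ h₂ * max (F 1) (F (-1)) * (-t) ^ h₂ := by
            rw [mul_assoc]
            apply mul_le_mul_of_nonneg_left _ hh₂0.le
            apply mul_le_mul_of_nonneg_right hA₂ (by rw [habs] at hpow₂; exact hpow₂.le)
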